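/- Let X be a finite-dimensional abstract simplicial complex satisfying: (i) for all vertices x, y, Σ_x ⊆ Σ_y implies x = y; and (ii) for every simplex K and every vertex x ∉ K, there is a maximal simplex L with K ⊆ L and x ∉ L. Then the automorphism group of X is isomorphic to the automorphism group of N(X), via the map sending an automorphism φ of X to the induced map K ↦ φ(K) on maximal simplices. -/

import Mathlib

/-- An abstract simplicial complex on vertex type `V`: a set of nonempty finite
sets closed under taking nonempty subsets. -/
def IsComplex {V : Type*} (X : Set (Finset V)) : Prop :=
  (∀ s ∈ X, s.Nonempty) ∧ ∀ s ∈ X, ∀ t : Finset V, t ⊆ s → t.Nonempty → t ∈ X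

/-- A maximal simplex of a (finite-dimensional) complex. -/
def IsMaxSimplex {V : Type*} (X : Set (Finset V)) (K : Finset V) : Prop :=
  K ∈ X ∧ ∀ L ∈ X, K ⊆ L → K = L

/-- Finite dimensionality: simplex cardinalities are bounded. -/
def FinDim {V : Type*} (X : Set (Finset V)) : Prop :=
  ∃ n : ℕ, ∀ s ∈ X, s.card ≤ n

/-- `SigmaV X x` is the collection of maximal simplices of `X` containing the vertex `x`. -/
def SigmaV {V : Type*} (X : Set (Finset V)) (x : V) : Set (Finset V) :=
  {K | IsMaxSimplex X K ∧ x ∈ K}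


/-- The automorphism group of the simplicial complex `X` (whose vertex set is all of `V`):
permutations of the vertices such that a finite vertex set is a simplex iff its image is. -/
def ComplexAut {V : Type*} [DecidableEq V] (X : Set (Finset V)) : Subgroup (Equiv.Perm V) where
  carrier := {e | ∀ s : Finset V, s ∈ X ↔ s.image e ∈ X}
  one_mem' := by intro s; simp
  mul_mem' := by
    intro a b ha hb s
    have h : s.image ⇑(a * b) = (s.image ⇑b).image ⇑a := by
      rw [Finset.image_image]; rfl
    rw [h]
    exact (hb s).trans (ha _)
  inv_mem' := by
    intro a ha s
    have h := ha (s.image ⇑a⁻¹)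
    have h2 : (s.image ⇑a⁻¹).image ⇑a = s := by
      rw [Finset.image_image]
      ext v
      simp
    rw [h2] at h
    exact h.symm

/-- The vertices of the nerve `N(X)`: maximal simplices of `X`. -/
abbrev MaxS {V : Type*} (X : Set (Finset V)) : Type _ := {K : Finset V // IsMaxSimplex X K}

/-- A simplex of the nerve `N(X)`: a nonempty finite family of maximal simplices of `X`
with nonempty common intersection. -/
def NerveSimplexS {V : Type*} (X : Set (Finset V)) (σ : Finset (MaxS X)) : Prop :=
  σ.Nonempty ∧ ∃ x : V, ∀ K ∈ σ, x ∈ K.1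

/-- The automorphism group of the nerve `N(X)`: permutations of the maximal simplices of `X`
such that a finite family is a simplex of `N(X)` iff its image is. -/
def NerveAut {V : Type*} [DecidableEq V] (X : Set (Finset V)) :
    Subgroup (Equiv.Perm (MaxS X)) where
  carrier := {e | ∀ σ : Finset (MaxS X), NerveSimplexS X σ ↔ NerveSimplexS X (σ.image e)}
  one_mem' := by intro σ; simp
  mul_mem' := by
    intro a b ha hb σ
    have h : σ.image ⇑(a * b) = (σ.image ⇑b).image ⇑a := by
      rw [Finset.image_image]; rfl
    rw [h]
    exact (hb σ).trans (ha _)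
  inv_mem' := by
    intro a ha σ
    have h := ha (σ.image ⇑a⁻¹)
    have h2 : (σ.image ⇑a⁻¹).image ⇑a = σ := by
      rw [Finset.image_image]
      ext v
      simp
    rw [h2] at h
    exact h.symm


section Aux

variable {V : Type*} [DecidableEq V] {X : Set (Finset V)}

lemma maxext (hfd : FinDim X) : ∀ s ∈ X, ∃ K, IsMaxSimplex X K ∧ s ⊆ K := by
  obtain ⟨n, hn⟩ := hfd
  have H : ∀ m : ℕ, ∀ s ∈ X, n - s.card ≤ m → ∃ K, IsMaxSimplex X K ∧ s ⊆ K := by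
    intro m
    induction m with
    | zero =>
      intro s hs hm
      refine ⟨s, ⟨hs, ?_⟩, subset_rfl⟩
      intro L hL hsL
      exact Finset.eq_of_subset_of_card_le hsL (by have h := hn L hL; omega)
    | succ m ih =>
      intro s hs hm
      by_cases hmax : ∀ L ∈ X, s ⊆ L → s = L
      · exact ⟨s, ⟨hs, hmax⟩, subset_rfl⟩
      · push_neg at hmax
        obtain ⟨L, hL, hsL, hne⟩ := hmax
        have hcard : s.card < L.card := Finset.card_lt_card (hsL.ssubset_of_ne hne)
        obtain ⟨K, hK, hLK⟩ := ih L hL (by omega)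
        exact ⟨K, hK, hsL.trans hLK⟩
  intro s hs
  exact H n s hs (by omega)

/-- The set of maximal simplices containing `x`, as a set of nerve vertices. -/
def SigS (X : Set (Finset V)) (x : V) : Set (MaxS X) := {K | x ∈ K.1}

/-- A finitely-intersecting family of maximal simplices. -/
def FI (X : Set (Finset V)) (S : Set (MaxS X)) : Prop :=
  ∀ σ : Finset (MaxS X), ↑σ ⊆ S → σ.Nonempty → ∃ x, ∀ K ∈ σ, x ∈ K.1

lemma fi_common {S : Set (MaxS X)} (hS : S.Nonempty) (hFI : FI X S) :
    ∃ x, ∀ K ∈ S, x ∈ K.1 := by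
  classical
  obtain ⟨K₀, hK₀⟩ := hS
  set W : Finset (MaxS X) → Finset V :=
    fun σ => K₀.1.filter (fun v => ∀ K ∈ σ, v ∈ K.1) with hWdef
  have hW : ∀ σ : Finset (MaxS X), ↑σ ⊆ S → (W σ).Nonempty := by
    intro σ hσ
    obtain ⟨x, hx⟩ := hFI (insert K₀ σ) (by
        intro K hK
        simp only [Finset.coe_insert, Set.mem_insert_iff, Finset.mem_coe] at hK
        rcases hK with rfl | h
        · exact hK₀
        · exact hσ h) ⟨K₀, Finset.mem_insert_self _ _⟩
    exact ⟨x, Finset.mem_filter.mpr ⟨hx K₀ (Finset.mem_insert_self _ _),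
      fun K hK => hx K (Finset.mem_insert_of_mem hK)⟩⟩
  let N : Set ℕ := {m | ∃ σ : Finset (MaxS X), ↑σ ⊆ S ∧ (W σ).card = m}
  have hNne : N.Nonempty := ⟨(W ∅).card, ∅, by simp, rfl⟩
  have hmem := Nat.sInf_mem hNne
  obtain ⟨σ₀, hσ₀S, hσ₀card⟩ := hmem
  have hmin : ∀ σ : Finset (MaxS X), ↑σ ⊆ S → (W σ₀).card ≤ (W σ).card := by
    intro σ hσ
    rw [hσ₀card]
    exact Nat.sInf_le ⟨σ, hσ, rfl⟩
  have key : ∀ K ∈ S, W σ₀ ⊆ K.1 := by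
    intro K hK
    have hins : ↑(insert K σ₀) ⊆ S := by
      intro L hL
      simp only [Finset.coe_insert, Set.mem_insert_iff, Finset.mem_coe] at hL
      rcases hL with rfl | h
      · exact hK
      · exact hσ₀S h
    have hsub : W (insert K σ₀) ⊆ W σ₀ := by
      intro v hv
      simp only [hWdef, Finset.mem_filter] at hv ⊢
      exact ⟨hv.1, fun L hL => hv.2 L (Finset.mem_insert_of_mem hL)⟩
    have heq : W (insert K σ₀) = W σ₀ :=
      Finset.eq_of_subset_of_card_le hsub (hmin _ hins)
    intro v hv
    rw [← heq] at hv
    simp only [hWdef, Finset.mem_filter] at hv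
    exact hv.2 K (Finset.mem_insert_self _ _)
  obtain ⟨x, hx⟩ := hW σ₀ hσ₀S
  exact ⟨x, fun K hK => key K hK hx⟩

lemma sig_fi (x : V) : FI X (SigS X x) :=
  fun _σ hσ _ => ⟨x, fun _K hK => hσ (Finset.mem_coe.mpr hK)⟩

lemma sig_ne (hfd : FinDim X) (hvert : ∀ x : V, ({x} : Finset V) ∈ X) (x : V) :
    (SigS X x).Nonempty := by
  obtain ⟨K, hK, hsub⟩ := maxext hfd {x} (hvert x)
  exact ⟨⟨K, hK⟩, Finset.singleton_subset_iff.mp hsub⟩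

lemma sig_imp (h1 : ∀ x y : V, SigmaV X x ⊆ SigmaV X y → x = y) {x y : V}
    (h : SigS X x ⊆ SigS X y) : x = y := by
  apply h1
  rintro K ⟨hKmax, hxK⟩
  exact ⟨hKmax, h (show (⟨K, hKmax⟩ : MaxS X) ∈ SigS X x from hxK)⟩

lemma sig_max (hfd : FinDim X) (hvert : ∀ x : V, ({x} : Finset V) ∈ X)
    (h1 : ∀ x y : V, SigmaV X x ⊆ SigmaV X y → x = y) {x : V} {S : Set (MaxS X)}
    (hxS : SigS X x ⊆ S) (hS : FI X S) : S ⊆ SigS X x := by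
  obtain ⟨y, hy⟩ := fi_common ((sig_ne hfd hvert x).mono hxS) hS
  have hSy : S ⊆ SigS X y := fun K hK => hy K hK
  have hxy := sig_imp h1 (hxS.trans hSy)
  exact hxy ▸ hSy

lemma fi_img {e : Equiv.Perm (MaxS X)} (he : e ∈ NerveAut X) {S : Set (MaxS X)}
    (hS : FI X S) : FI X (⇑e '' S) := by
  intro σ hσ hne
  have hσ' : ↑(σ.image ⇑e⁻¹) ⊆ S := by
    intro K hK
    simp only [Finset.coe_image, Set.mem_image, Finset.mem_coe] at hK
    obtain ⟨L, hL, rfl⟩ := hK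
    obtain ⟨M, hM, hML⟩ := hσ (Finset.mem_coe.mpr hL)
    rw [← hML]
    simpa using hM
  have hne' : (σ.image ⇑e⁻¹).Nonempty := hne.image _
  obtain ⟨x, hx⟩ := hS _ hσ' hne'
  have hns : NerveSimplexS X (σ.image ⇑e⁻¹) := ⟨hne', x, hx⟩
  have himg := (he (σ.image ⇑e⁻¹)).mp hns
  have heq : (σ.image ⇑e⁻¹).image ⇑e = σ := by
    rw [Finset.image_image]
    ext K
    simp
  rw [heq] at himg
  exact himg.2

lemma key_vertex (hfd : FinDim X) (hvert : ∀ x : V, ({x} : Finset V) ∈ X)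
    (h1 : ∀ x y : V, SigmaV X x ⊆ SigmaV X y → x = y)
    {e : Equiv.Perm (MaxS X)} (he : e ∈ NerveAut X) (x : V) :
    ∃ y, ∀ K : MaxS X, x ∈ K.1 ↔ y ∈ (e K).1 := by
  have hfiI : FI X (⇑e '' SigS X x) := fi_img he (sig_fi x)
  have hneI : (⇑e '' SigS X x).Nonempty := (sig_ne hfd hvert x).image _
  obtain ⟨y, hy⟩ := fi_common hneI hfiI
  have hsub : ⇑e '' SigS X x ⊆ SigS X y := fun K hK => hy K hK
  have hsub2 : SigS X x ⊆ ⇑e⁻¹ '' SigS X y := by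
    intro K hK
    exact ⟨e K, hsub ⟨K, hK, rfl⟩, by simp⟩
  have hfi2 : FI X (⇑e⁻¹ '' SigS X y) := fi_img ((NerveAut X).inv_mem he) (sig_fi y)
  have hsub3 := sig_max hfd hvert h1 hsub2 hfi2
  refine ⟨y, fun K => ⟨fun hx => hsub ⟨K, hx, rfl⟩, fun hy' => ?_⟩⟩
  have hKm : K ∈ ⇑e⁻¹ '' SigS X y := ⟨e K, hy', by simp⟩
  exact hsub3 hKm

lemma aut_image_max {φ : Equiv.Perm V} (hφ : φ ∈ ComplexAut X)
    {K : Finset V} (hK : IsMaxSimplex X K) : IsMaxSimplex X (K.image ⇑φ) := by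
  have hφ' : ∀ s : Finset V, s ∈ X ↔ s.image ⇑φ ∈ X := hφ
  refine ⟨(hφ' K).1 hK.1, ?_⟩
  intro L hL hsub
  have himid : (L.image ⇑φ⁻¹).image ⇑φ = L := by
    rw [Finset.image_image]
    ext v
    simp
  have hinv : L.image ⇑φ⁻¹ ∈ X := (hφ' (L.image ⇑φ⁻¹)).2 (by rw [himid]; exact hL)
  have hKsub : K ⊆ L.image ⇑φ⁻¹ := by
    intro v hv
    exact Finset.mem_image.mpr ⟨φ v, hsub (Finset.mem_image_of_mem _ hv), by simp⟩
  have hEq := hK.2 _ hinv hKsub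
  rw [hEq, himid]

end Aux

/-- Under hypotheses (i) and (ii), `Aut(X) ≅ Aut(N(X))` via the map sending an automorphism
`φ` of `X` to the induced map `K ↦ φ(K)` on maximal simplices. -/
theorem stmt4 {V : Type*} [DecidableEq V] (X : Set (Finset V))
    (hX : IsComplex X) (hfd : FinDim X)
    (hvert : ∀ x : V, ({x} : Finset V) ∈ X)
    (h1 : ∀ x y : V, SigmaV X x ⊆ SigmaV X y → x = y)
    (h2 : ∀ K ∈ X, ∀ x : V, x ∉ K → ∃ L, IsMaxSimplex X L ∧ K ⊆ L ∧ x ∉ L) :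
    ∃ Ω : ComplexAut X ≃* NerveAut X,
      ∀ (φ : ComplexAut X) (K : MaxS X),
        (((Ω φ : Equiv.Perm (MaxS X))) K).1 = K.1.image ⇑(φ : Equiv.Perm V) := by
  classical
  let F : ComplexAut X → Equiv.Perm (MaxS X) := fun φ =>
    { toFun := fun K => ⟨K.1.image ⇑(φ : Equiv.Perm V), aut_image_max φ.2 K.2⟩
      invFun := fun K => ⟨K.1.image ⇑((φ : Equiv.Perm V)⁻¹),
        aut_image_max ((ComplexAut X).inv_mem φ.2) K.2⟩
      left_inv := fun K => Subtype.ext (by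
        have hc : ⇑((φ : Equiv.Perm V)⁻¹) ∘ ⇑(φ : Equiv.Perm V) = id := by
          ext v; simp
        show (K.1.image ⇑(φ : Equiv.Perm V)).image ⇑((φ : Equiv.Perm V)⁻¹) = K.1
        rw [Finset.image_image, hc, Finset.image_id])
      right_inv := fun K => Subtype.ext (by
        have hc : ⇑(φ : Equiv.Perm V) ∘ ⇑((φ : Equiv.Perm V)⁻¹) = id := by
          ext v; simp
        show (K.1.image ⇑((φ : Equiv.Perm V)⁻¹)).image ⇑(φ : Equiv.Perm V) = K.1
        rw [Finset.image_image, hc, Finset.image_id]) }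
  have hFmem : ∀ φ : ComplexAut X, F φ ∈ NerveAut X := by
    intro φ σ
    constructor
    · rintro ⟨hne, x, hx⟩
      refine ⟨hne.image _, (φ : Equiv.Perm V) x, ?_⟩
      intro L hL
      obtain ⟨K, hK, rfl⟩ := Finset.mem_image.mp hL
      exact Finset.mem_image_of_mem _ (hx K hK)
    · rintro ⟨hne, x, hx⟩
      refine ⟨Finset.image_nonempty.mp hne, (φ : Equiv.Perm V)⁻¹ x, ?_⟩
      intro K hK
      have hx' := hx (F φ K) (Finset.mem_image_of_mem _ hK)
      obtain ⟨v, hv, hveq⟩ := Finset.mem_image.mp hx'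
      have hvv : (φ : Equiv.Perm V)⁻¹ x = v := by rw [← hveq]; simp
      rw [hvv]
      exact hv
  let T : ComplexAut X →* NerveAut X := MonoidHom.mk' (fun φ => ⟨F φ, hFmem φ⟩) (by
    intro a b
    refine Subtype.ext (Equiv.ext fun K => Subtype.ext ?_)
    show K.1.image ⇑((a * b : ComplexAut X) : Equiv.Perm V)
        = (K.1.image ⇑(b : Equiv.Perm V)).image ⇑(a : Equiv.Perm V)
    rw [Finset.image_image]
    rfl)
  have hinj : Function.Injective T := by
    rw [injective_iff_map_eq_one]
    intro φ hφ1
    have hfix : ∀ K : MaxS X, K.1.image ⇑(φ : Equiv.Perm V) = K.1 := by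
      intro K
      have hc := congrArg (fun e : NerveAut X => ((e : Equiv.Perm (MaxS X)) K).1) hφ1
      have hc' : ((T φ : Equiv.Perm (MaxS X)) K).1 = K.1 := by simpa using hc
      exact hc'
    refine Subtype.ext (Equiv.ext fun v => ?_)
    show (φ : Equiv.Perm V) v = v
    symm
    apply h1 v ((φ : Equiv.Perm V) v)
    rintro K ⟨hKmax, hvK⟩
    refine ⟨hKmax, ?_⟩
    have hfx : K.image ⇑(φ : Equiv.Perm V) = K := hfix ⟨K, hKmax⟩
    rw [← hfx]
    exact Finset.mem_image_of_mem _ hvK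
  have hsurj : Function.Surjective T := by
    intro u
    have hψ : (u : Equiv.Perm (MaxS X)) ∈ NerveAut X := u.2
    set ψ : Equiv.Perm (MaxS X) := (u : Equiv.Perm (MaxS X)) with hψdef
    choose f hf using fun x => key_vertex hfd hvert h1 hψ x
    choose g hg using fun x => key_vertex hfd hvert h1 ((NerveAut X).inv_mem hψ) x
    have hgf : ∀ x, g (f x) = x := by
      intro x
      refine sig_imp h1 (fun K hK => ?_)
      have e1 := hg (f x) (ψ K)
      have e2 : ψ⁻¹ (ψ K) = K := by simp
      rw [e2] at e1
      exact (hf x K).mpr (e1.mpr hK)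
    have hfg : ∀ x, f (g x) = x := by
      intro x
      refine sig_imp h1 (fun K hK => ?_)
      have e1 := hf (g x) (ψ⁻¹ K)
      have e2 : ψ (ψ⁻¹ K) = K := by simp
      rw [e2] at e1
      exact (hg x K).mpr (e1.mpr hK)
    let φperm : Equiv.Perm V := ⟨f, g, hgf, hfg⟩
    have hchar : ∀ s : Finset V, s ∈ X ↔ s.Nonempty ∧ ∃ K : MaxS X, s ⊆ K.1 := by
      intro s
      constructor
      · intro hs
        obtain ⟨K, hK, hsK⟩ := maxext hfd s hs
        exact ⟨hX.1 s hs, ⟨K, hK⟩, hsK⟩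
      · rintro ⟨hne, K, hsK⟩
        exact hX.2 K.1 K.2.1 s hsK hne
    have hmemX : ∀ s : Finset V, s ∈ X ↔ s.image f ∈ X := by
      intro s
      rw [hchar s, hchar (s.image f)]
      constructor
      · rintro ⟨hne, K, hsK⟩
        refine ⟨hne.image f, ψ K, ?_⟩
        intro v hv
        obtain ⟨x, hx, rfl⟩ := Finset.mem_image.mp hv
        exact (hf x K).mp (hsK hx)
      · rintro ⟨hne, K, hsK⟩
        refine ⟨Finset.image_nonempty.mp hne, ψ⁻¹ K, ?_⟩
        intro x hx
        have e1 := hf x (ψ⁻¹ K)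
        have e2 : ψ (ψ⁻¹ K) = K := by simp
        rw [e2] at e1
        exact e1.mpr (hsK (Finset.mem_image_of_mem f hx))
    have hφmem : φperm ∈ ComplexAut X := hmemX
    refine ⟨⟨φperm, hφmem⟩, ?_⟩
    refine Subtype.ext (Equiv.ext fun K => Subtype.ext ?_)
    show K.1.image f = (ψ K).1
    have hsub : K.1.image f ⊆ (ψ K).1 := by
      intro v hv
      obtain ⟨x, hx, rfl⟩ := Finset.mem_image.mp hv
      exact (hf x K).mp hx
    have hmax : IsMaxSimplex X (K.1.image f) :=
      aut_image_max (φ := φperm) hφmem K.2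
    exact hmax.2 _ (ψ K).2.1 hsub
  refine ⟨MulEquiv.ofBijective T ⟨hinj, hsurj⟩, ?_⟩
  intro φ K
  rfl
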